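/- Fix λ > 1, Z₁, Z₂ ∈ ℝ and Y₁, Y₂ > 0 with (Z₁,Y₁) ≠ (Z₂,Y₂). Set Z = Z₂ - Z₁, W = (Y₂/Y₁)^{1/3}, and define C(ζ; Zᵢ, Yᵢ) = Yᵢ^{1/3}·(2λ^{-(ζ-Zᵢ)/2} + λ^{ζ-Zᵢ})/3. If λ^Z < min(W, W⁻²) or λ^Z > max(W, W⁻²), then the equation C(ζ; Z₁,Y₁) = C(ζ; Z₂,Y₂) has exactly one real solution ζ*, given by λ^{3(ζ*-Z₁)/2} = 2λ^Z(Wλ^{Z/2} - 1)/(λ^Z - W). -/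

import Mathlib

/-- Intersection of two 'hyperbolic cosine-like' functions: for `λ > 1`, `Y₁,Y₂ > 0`,
`(Z₁,Y₁) ≠ (Z₂,Y₂)`, with `Z = Z₂ - Z₁` and `W = (Y₂/Y₁)^{1/3}`, if
`λ^Z < min(W, W⁻²)` or `λ^Z > max(W, W⁻²)`, then the equation
`C(ζ;Z₁,Y₁) = C(ζ;Z₂,Y₂)` has exactly one real solution `ζ*`, given by
`λ^{3(ζ*-Z₁)/2} = 2λ^Z(Wλ^{Z/2} - 1)/(λ^Z - W)`. -/
theorem stmt14 (lam : ℝ) (hlam : 1 < lam)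
    (Z₁ Z₂ Y₁ Y₂ : ℝ) (hY₁ : 0 < Y₁) (hY₂ : 0 < Y₂)
    (hne : (Z₁, Y₁) ≠ (Z₂, Y₂))
    (Z W : ℝ) (hZ : Z = Z₂ - Z₁) (hW : W = (Y₂ / Y₁) ^ ((1 : ℝ) / 3))
    (hcond : lam ^ Z < min W (W⁻¹ ^ 2) ∨ max W (W⁻¹ ^ 2) < lam ^ Z) :
    let Cf : ℝ → ℝ → ℝ → ℝ := fun Z' Y ζ =>
      Y ^ ((1 : ℝ) / 3) * (2 * lam ^ (-(ζ - Z') / 2) + lam ^ (ζ - Z')) / 3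
    (∃! ζ : ℝ, Cf Z₁ Y₁ ζ = Cf Z₂ Y₂ ζ) ∧
    ∀ ζ : ℝ, Cf Z₁ Y₁ ζ = Cf Z₂ Y₂ ζ →
      lam ^ (3 * (ζ - Z₁) / 2)
        = 2 * lam ^ Z * (W * lam ^ (Z / 2) - 1) / (lam ^ Z - W) := by
  intro Cf
  have hlam0 : (0:ℝ) < lam := by linarith
  have hlog : 0 < Real.log lam := Real.log_pos hlam
  set u := lam ^ Z with hu_def
  set s := lam ^ (Z / 2) with hs_def
  have hu : 0 < u := Real.rpow_pos_of_pos hlam0 _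
  have hs : 0 < s := Real.rpow_pos_of_pos hlam0 _
  have hss : s * s = u := by
    rw [hs_def, hu_def, ← Real.rpow_add hlam0]; ring_nf
  have hW0 : 0 < W := by
    rw [hW]; exact Real.rpow_pos_of_pos (div_pos hY₂ hY₁) _
  have hP : 0 < Y₁ ^ ((1:ℝ)/3) := Real.rpow_pos_of_pos hY₁ _
  have hWY : Y₂ ^ ((1:ℝ)/3) = W * Y₁ ^ ((1:ℝ)/3) := by
    rw [hW, Real.div_rpow hY₂.le hY₁.le]
    field_simp
  have hsign : (u - W < 0 ∧ W * s - 1 < 0) ∨ (0 < u - W ∧ 0 < W * s - 1) := by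
    rcases hcond with h | h
    · left
      have h1 : u < W := lt_of_lt_of_le h (min_le_left _ _)
      have h2 : u < W⁻¹ ^ 2 := lt_of_lt_of_le h (min_le_right _ _)
      have h3 : s < W⁻¹ := by
        apply lt_of_pow_lt_pow_left₀ 2 (by positivity)
        calc s ^ 2 = u := by rw [sq]; exact hss
          _ < W⁻¹ ^ 2 := h2
      refine ⟨by linarith, ?_⟩
      have h4 : W * s < W * W⁻¹ := (mul_lt_mul_iff_right₀ hW0).2 h3
      rw [mul_inv_cancel₀ (ne_of_gt hW0)] at h4
      linarith
    · right
      have h1 : W < u := lt_of_le_of_lt (le_max_left _ _) h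
      have h2 : W⁻¹ ^ 2 < u := lt_of_le_of_lt (le_max_right _ _) h
      have h3 : W⁻¹ < s := by
        apply lt_of_pow_lt_pow_left₀ 2 hs.le
        calc W⁻¹ ^ 2 < u := h2
          _ = s ^ 2 := by rw [sq, hss]
      refine ⟨by linarith, ?_⟩
      have h4 : W * W⁻¹ < W * s := (mul_lt_mul_iff_right₀ hW0).2 h3
      rw [mul_inv_cancel₀ (ne_of_gt hW0)] at h4
      linarith
  have hden : u - W ≠ 0 := by
    rcases hsign with ⟨h, _⟩ | ⟨h, _⟩
    · exact ne_of_lt h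
    · exact ne_of_gt h
  have ht : 0 < 2 * u * (W * s - 1) / (u - W) := by
    rcases hsign with ⟨h1, h2⟩ | ⟨h1, h2⟩
    · exact div_pos_of_neg_of_neg (by nlinarith) h1
    · exact div_pos (by nlinarith) h1
  set t := 2 * u * (W * s - 1) / (u - W) with ht_def
  have key : ∀ ζ : ℝ, (Cf Z₁ Y₁ ζ = Cf Z₂ Y₂ ζ ↔ lam ^ (3 * (ζ - Z₁) / 2) = t) := by
    intro ζ
    set a := lam ^ ((ζ - Z₁) / 2) with ha_def
    have ha : 0 < a := Real.rpow_pos_of_pos hlam0 _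
    have e1 : lam ^ (-(ζ - Z₁) / 2) = a⁻¹ := by
      rw [ha_def, ← Real.rpow_neg hlam0.le]; ring_nf
    have e2 : lam ^ (ζ - Z₁) = a * a := by
      rw [ha_def, ← Real.rpow_add hlam0]; ring_nf
    have e3 : lam ^ (ζ - Z₂) = a * a / u := by
      rw [eq_div_iff (ne_of_gt hu), ← e2, hu_def, ← Real.rpow_add hlam0]
      congr 1; rw [hZ]; ring
    have e4 : lam ^ (-(ζ - Z₂) / 2) = s / a := by
      rw [eq_div_iff (ne_of_gt ha), ha_def, hs_def, ← Real.rpow_add hlam0]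
      congr 1; rw [hZ]; ring
    have e5 : lam ^ (3 * (ζ - Z₁) / 2) = a * a * a := by
      rw [ha_def, ← Real.rpow_add hlam0, ← Real.rpow_add hlam0]; ring_nf
    simp only [Cf, e1, e2, e3, e4, hWY, e5]
    rw [ht_def, eq_div_iff hden]
    constructor
    · intro h
      field_simp at h
      have h' : Y₁ ^ ((1:ℝ)/3) * (a * 3) * ((2 + a * a * a) * u)
          = Y₁ ^ ((1:ℝ)/3) * (a * 3) * (W * (2 * s * u + a * a * a)) := by
        linear_combination (Y₁ ^ ((1:ℝ)/3) * (a * 3)) * h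
      have h'' := mul_left_cancel₀ (by positivity : Y₁ ^ ((1:ℝ)/3) * (a * 3) ≠ 0) h'
      linear_combination h''
    · intro h
      field_simp
      linear_combination h
  have hsolve : ∀ x : ℝ, (lam ^ x = t ↔ x = Real.log t / Real.log lam) := by
    intro x
    rw [Real.rpow_def_of_pos hlam0]
    constructor
    · intro h
      have h2 := congrArg Real.log h
      rw [Real.log_exp] at h2
      field_simp
      linarith [h2]
    · intro h
      rw [h]
      rw [mul_div_cancel₀ _ (ne_of_gt hlog)]
      exact Real.exp_log ht
  refine ⟨⟨Z₁ + 2 * (Real.log t / Real.log lam) / 3, ?_, ?_⟩, fun ζ h => (key ζ).1 h⟩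
  · show Cf Z₁ Y₁ _ = Cf Z₂ Y₂ _
    rw [key, hsolve]
    ring
  · intro ζ hζ
    have h1 := (hsolve _).1 ((key ζ).1 hζ)
    linarith
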